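/- arXiv:1201.4631 — 5 statements merged into one kernel-verified Lean document; each statement's English description precedes it below -/
import Mathlib

section
/- Let V : (0,∞) → ℝ be continuous with V(u) → ∞ as u → 0⁺ and as u → ∞, such that u ↦ exp(-βV(u)) and u ↦ u·exp(-βV(u)) are integrable on (0,∞) for every β > 0, and such that V attains its global minimum at a unique point a > 0. Assume V is four times continuously differentiable in a neighborhood of a, with V''(a) = 2c₂ > 0 and V'''(a) = 6c₃ with c₃ < 0. Then for all sufficiently small T > 0 the mean spacing exceeds the ground-state spacing: m(T) > a (macroscopic thermal expansion). -/
open MeasureTheory Set Filter Topology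

private lemma mono_aux (f f' : ℝ → ℝ) {t : ℝ} (ht : 0 ≤ t)
    (hd : ∀ s ∈ Icc (0:ℝ) t, HasDerivAt f (f' s) s)
    (h0 : ∀ s ∈ Icc (0:ℝ) t, 0 ≤ f' s) : f 0 ≤ f t := by
  have hmono : MonotoneOn f (Icc 0 t) := by
    apply monotoneOn_of_deriv_nonneg (convex_Icc 0 t)
    · exact fun s hs => (hd s hs).continuousAt.continuousWithinAt
    · intro s hs
      exact ((hd s (interior_subset hs)).differentiableAt).differentiableWithinAt
    · intro s hs
      rw [(hd s (interior_subset hs)).deriv]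
      exact h0 s (interior_subset hs)
  exact hmono ⟨le_rfl, ht⟩ ⟨ht, le_rfl⟩ ht

private lemma poly_bound (ψ ψ' : ℝ → ℝ) (K δ : ℝ) (k : ℕ) (h0 : ψ 0 = 0)
    (hd : ∀ s ∈ Icc (0:ℝ) δ, HasDerivAt ψ (ψ' s) s)
    (hb : ∀ s ∈ Icc (0:ℝ) δ, |ψ' s| ≤ K * s ^ k) :
    ∀ t ∈ Icc (0:ℝ) δ, |ψ t| ≤ K / (k+1) * t ^ (k+1) := by
  intro t ht
  have hsub : Icc (0:ℝ) t ⊆ Icc 0 δ := Icc_subset_Icc le_rfl ht.2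
  have hpow : ∀ s : ℝ, HasDerivAt (fun x : ℝ => K / (k+1) * x ^ (k+1)) (K * s ^ k) s := by
    intro s
    have h := (hasDerivAt_pow (k+1) s).const_mul (K / (k+1))
    refine h.congr_deriv ?_
    simp only [Nat.add_sub_cancel, Nat.cast_add, Nat.cast_one]
    have : ((k:ℝ) + 1) ≠ 0 := by positivity
    field_simp
  have h1 : ψ t ≤ K / (k+1) * t ^ (k+1) := by
    have := mono_aux (fun s => K / (k+1) * s ^ (k+1) - ψ s) (fun s => K * s ^ k - ψ' s) ht.1
      (fun s hs => (hpow s).sub (hd s (hsub hs)))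
      (fun s hs => by
        have := hb s (hsub hs)
        have := abs_le.1 this
        simp only [sub_nonneg]
        linarith [this.2])
    simp only [h0, sub_zero, zero_pow, mul_zero, Nat.succ_ne_zero, ne_eq] at this
    have h00 : K / (k+1) * (0:ℝ) ^ (k+1) - ψ 0 = 0 := by simp [h0]
    linarith [this]
  have h2 : -(K / (k+1) * t ^ (k+1)) ≤ ψ t := by
    have := mono_aux (fun s => K / (k+1) * s ^ (k+1) + ψ s) (fun s => K * s ^ k + ψ' s) ht.1
      (fun s hs => (hpow s).add (hd s (hsub hs)))
      (fun s hs => by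
        have := abs_le.1 (hb s (hsub hs))
        show 0 ≤ K * s ^ k + ψ' s
        linarith [this.1])
    have h00 : K / ((k:ℝ)+1) * (0:ℝ) ^ (k+1) + ψ 0 = 0 := by simp [h0]
    linarith
  exact abs_le.2 ⟨h2, h1⟩

private lemma iterDW_open (f : ℝ → ℝ) (O : Set ℝ) (hO : IsOpen O) (k : ℕ) :
    ∀ x ∈ O, iteratedDerivWithin k f O x = iteratedDeriv k f x := by
  induction k with
  | zero => intro x _; simp [iteratedDerivWithin_zero, iteratedDeriv_zero]
  | succ k ih =>
    intro x hx
    rw [iteratedDerivWithin_succ, iteratedDeriv_succ,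
      derivWithin_of_isOpen hO hx]
    apply Filter.EventuallyEq.deriv_eq
    filter_upwards [hO.mem_nhds hx] with y hy using ih y hy

private lemma integral_comp_const_sub (f : ℝ → ℝ) (a : ℝ) :
    ∫ x : ℝ, f (a - x) = ∫ x : ℝ, f x := by
  have h1 : ∫ x : ℝ, f (a - x) = ∫ x : ℝ, f (a + x) := by
    have := integral_neg_eq_self (fun x : ℝ => f (a + x)) volume
    simpa [sub_eq_add_neg] using this
  rw [h1]
  simpa [add_comm] using integral_add_right_eq_self f a
set_option maxHeartbeats 2000000 in
/-- **Macroscopic thermal expansion for `c₃ < 0`.**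
If at the unique global minimum `a > 0` the potential satisfies `V''(a) = 2c₂ > 0` and
`V'''(a) = 6c₃` with `c₃ < 0`, then for all sufficiently small `T > 0` the mean spacing
exceeds the ground-state spacing: `m(T) > a`. -/
theorem thermal_expansion_positive_of_c₃_neg
    (V : ℝ → ℝ) (a c₂ c₃ : ℝ)
    (hcont : ContinuousOn V (Ioi 0))
    (hV0 : Tendsto V (𝓝[>] 0) atTop)
    (hVinf : Tendsto V atTop atTop)
    (hint : ∀ β : ℝ, 0 < β →
      IntegrableOn (fun u => Real.exp (-β * V u)) (Ioi 0) ∧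
      IntegrableOn (fun u => u * Real.exp (-β * V u)) (Ioi 0))
    (ha : 0 < a)
    (hmin : ∀ u ∈ Ioi (0:ℝ), u ≠ a → V a < V u)
    (hsmooth : ContDiffAt ℝ 4 V a)
    (hc₂ : 0 < c₂)
    (hV2 : iteratedDeriv 2 V a = 2 * c₂)
    (hV3 : iteratedDeriv 3 V a = 6 * c₃)
    (hc₃ : c₃ < 0) :
    ∀ᶠ T : ℝ in 𝓝[>] 0,
      a < (∫ u in Ioi (0:ℝ), u * Real.exp (-T⁻¹ * V u)) /
            (∫ u in Ioi (0:ℝ), Real.exp (-T⁻¹ * V u)) := by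
  have hVge : ∀ u ∈ Ioi (0:ℝ), V a ≤ V u := by
    intro u hu
    rcases eq_or_ne u a with rfl | h
    · exact le_rfl
    · exact (hmin u hu h).le
  have hD1 : iteratedDeriv 1 V a = 0 := by
    rw [iteratedDeriv_one]
    apply IsLocalMin.deriv_eq_zero
    filter_upwards [isOpen_Ioi.mem_nhds ha] with u hu using hVge u hu
  obtain ⟨u₀, hu₀, hVO₀⟩ := hsmooth.contDiffOn le_rfl (by simp)
  set O : Set ℝ := interior u₀ ∩ Ioi 0 with hOdef
  have hOopen : IsOpen O := isOpen_interior.inter isOpen_Ioi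
  have haO : a ∈ O := ⟨mem_interior_iff_mem_nhds.2 hu₀, ha⟩
  have hVO : ContDiffOn ℝ 4 V O := hVO₀.mono fun x hx => interior_subset hx.1
  have hkey : ∀ k : ℕ, k < 4 → ∀ x ∈ O,
      HasDerivAt (iteratedDeriv k V) (iteratedDeriv (k+1) V x) x := by
    intro k hk x hx
    have hdiff : DifferentiableOn ℝ (iteratedDerivWithin k V O) O :=
      hVO.differentiableOn_iteratedDerivWithin (by exact_mod_cast hk) hOopen.uniqueDiffOn
    have h1 : DifferentiableAt ℝ (iteratedDerivWithin k V O) x :=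
      (hdiff x hx).differentiableAt (hOopen.mem_nhds hx)
    have heq : iteratedDerivWithin k V O =ᶠ[𝓝 x] iteratedDeriv k V := by
      filter_upwards [hOopen.mem_nhds hx] with y hy using iterDW_open V O hOopen k y hy
    have h2 : DifferentiableAt ℝ (iteratedDeriv k V) x := h1.congr_of_eventuallyEq heq.symm
    rw [iteratedDeriv_succ]
    exact h2.hasDerivAt
  have hcont3 : ContinuousOn (iteratedDeriv 3 V) O := by
    refine ContinuousOn.congr (hVO.continuousOn_iteratedDerivWithin (m := 3) (by norm_cast) hOopen.uniqueDiffOn) ?_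
    exact fun y hy => (iterDW_open V O hOopen 3 y hy).symm
  obtain ⟨r, hr, hrO⟩ : ∃ r > 0, Icc (a-r) (a+r) ⊆ O := by
    obtain ⟨ε, hε, hball⟩ := Metric.isOpen_iff.1 hOopen a haO
    refine ⟨ε/2, by positivity, fun x hx => hball ?_⟩
    rw [Metric.mem_ball, Real.dist_eq]
    rw [abs_sub_lt_iff]
    constructor <;> [skip; skip] <;> cases' hx with h1 h2 <;> linarith
  -- continuity of ψ₃ at 0
  have hc3a : ContinuousAt (iteratedDeriv 3 V) a := hcont3.continuousAt (hOopen.mem_nhds haO)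
  have hψ₃c : ContinuousAt (fun s : ℝ => iteratedDeriv 3 V (a+s) + iteratedDeriv 3 V (a-s) - 12*c₃) 0 := by
    have e1 : ContinuousAt (fun s : ℝ => iteratedDeriv 3 V (a + s)) 0 := by
      have h : ContinuousAt (iteratedDeriv 3 V) ((fun s : ℝ => a + s) 0) := by simpa using hc3a
      exact h.comp (continuousAt_const.add continuousAt_id)
    have e2 : ContinuousAt (fun s : ℝ => iteratedDeriv 3 V (a - s)) 0 := by
      have h : ContinuousAt (iteratedDeriv 3 V) ((fun s : ℝ => a - s) 0) := by simpa using hc3a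
      exact h.comp (continuousAt_const.sub continuousAt_id)
    exact (e1.add e2).sub continuousAt_const
  have hψ₃0 : iteratedDeriv 3 V (a + 0) + iteratedDeriv 3 V (a - 0) - 12 * c₃ = 0 := by
    simp [hV3]; ring
  have habs : Tendsto (fun s : ℝ => |iteratedDeriv 3 V (a+s) + iteratedDeriv 3 V (a-s) - 12*c₃|) (𝓝 0) (𝓝 0) := by
    have := hψ₃c.tendsto
    rw [hψ₃0] at this
    simpa using this.abs
  have hev : ∀ᶠ s : ℝ in 𝓝 0, |iteratedDeriv 3 V (a+s) + iteratedDeriv 3 V (a-s) - 12*c₃| < -c₃ :=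
    habs.eventually_lt_const (by linarith)
  obtain ⟨δ₁, hδ₁, hδ₁h⟩ := Metric.eventually_nhds_iff.1 hev
  set δ₀ : ℝ := min (δ₁/2) r with hδ₀def
  have hδ₀ : 0 < δ₀ := lt_min (by linarith) hr
  have hmem : ∀ s ∈ Icc (0:ℝ) δ₀, a + s ∈ O ∧ a - s ∈ O := by
    intro s hs
    have h1 : s ≤ r := le_trans hs.2 (min_le_right _ _)
    constructor
    · exact hrO ⟨by linarith [hs.1], by linarith⟩
    · exact hrO ⟨by linarith, by linarith [hs.1]⟩
  have hb₃ : ∀ s ∈ Icc (0:ℝ) δ₀, |iteratedDeriv 3 V (a+s) + iteratedDeriv 3 V (a-s) - 12*c₃| ≤ (-c₃) * s ^ 0 := by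
    intro s hs
    have : dist s 0 < δ₁ := by
      rw [Real.dist_eq, sub_zero, abs_of_nonneg hs.1]
      have := hs.2
      have h2 : δ₀ ≤ δ₁/2 := min_le_left _ _
      linarith
    simpa using (hδ₁h this).le
  -- derivative chains
  have hψ₂d : ∀ s ∈ Icc (0:ℝ) δ₀, HasDerivAt
      (fun t => iteratedDeriv 2 V (a+t) - iteratedDeriv 2 V (a-t) - 12*c₃*t)
      (iteratedDeriv 3 V (a+s) + iteratedDeriv 3 V (a-s) - 12*c₃) s := by
    intro s hs
    obtain ⟨hp, hm⟩ := hmem s hs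
    have h1 : HasDerivAt (fun t : ℝ => iteratedDeriv 2 V (a+t)) (iteratedDeriv 3 V (a+s)) s := by
      have := (hkey 2 (by norm_num) _ hp).comp s ((hasDerivAt_id s).const_add a)
      simpa [Function.comp_def] using this
    have h2 : HasDerivAt (fun t : ℝ => iteratedDeriv 2 V (a-t)) (-iteratedDeriv 3 V (a-s)) s := by
      have := (hkey 2 (by norm_num) _ hm).comp s (HasDerivAt.const_sub a (hasDerivAt_id s))
      simpa [Function.comp_def] using this
    have h3 : HasDerivAt (fun t : ℝ => 12*c₃*t) (12*c₃) s := by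
      simpa using (hasDerivAt_id s).const_mul (12*c₃)
    have h4 := (h1.sub h2).sub h3
    refine h4.congr_deriv ?_
    ring
  have hψ₁d : ∀ s ∈ Icc (0:ℝ) δ₀, HasDerivAt
      (fun t => iteratedDeriv 1 V (a+t) + iteratedDeriv 1 V (a-t) - 6*c₃*t^2)
      (iteratedDeriv 2 V (a+s) - iteratedDeriv 2 V (a-s) - 12*c₃*s) s := by
    intro s hs
    obtain ⟨hp, hm⟩ := hmem s hs
    have h1 : HasDerivAt (fun t : ℝ => iteratedDeriv 1 V (a+t)) (iteratedDeriv 2 V (a+s)) s := by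
      have := (hkey 1 (by norm_num) _ hp).comp s ((hasDerivAt_id s).const_add a)
      simpa [Function.comp_def] using this
    have h2 : HasDerivAt (fun t : ℝ => iteratedDeriv 1 V (a-t)) (-iteratedDeriv 2 V (a-s)) s := by
      have := (hkey 1 (by norm_num) _ hm).comp s (HasDerivAt.const_sub a (hasDerivAt_id s))
      simpa [Function.comp_def] using this
    have h3 : HasDerivAt (fun t : ℝ => 6*c₃*t^2) (6*c₃*(2*s)) s := by
      have := (hasDerivAt_pow 2 s).const_mul (6*c₃)
      simpa using this
    have h4 := (h1.add h2).sub h3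
    refine h4.congr_deriv ?_
    ring
  have hψ₀d : ∀ s ∈ Icc (0:ℝ) δ₀, HasDerivAt
      (fun t => V (a+t) - V (a-t) - 2*c₃*t^3)
      (iteratedDeriv 1 V (a+s) + iteratedDeriv 1 V (a-s) - 6*c₃*s^2) s := by
    intro s hs
    obtain ⟨hp, hm⟩ := hmem s hs
    have hkey0 : ∀ x ∈ O, HasDerivAt V (iteratedDeriv 1 V x) x := by
      intro x hx
      have := hkey 0 (by norm_num) x hx
      rwa [iteratedDeriv_zero] at this
    have h1 : HasDerivAt (fun t : ℝ => V (a+t)) (iteratedDeriv 1 V (a+s)) s := by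
      have := (hkey0 _ hp).comp s ((hasDerivAt_id s).const_add a)
      simpa [Function.comp_def] using this
    have h2 : HasDerivAt (fun t : ℝ => V (a-t)) (-iteratedDeriv 1 V (a-s)) s := by
      have := (hkey0 _ hm).comp s (HasDerivAt.const_sub a (hasDerivAt_id s))
      simpa [Function.comp_def] using this
    have h3 : HasDerivAt (fun t : ℝ => 2*c₃*t^3) (2*c₃*(3*s^2)) s := by
      have := (hasDerivAt_pow 3 s).const_mul (2*c₃)
      simpa using this
    have h4 := (h1.sub h2).sub h3
    refine h4.congr_deriv ?_
    ring
  -- successive bounds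
  have hb₂ := poly_bound _ _ (-c₃) δ₀ 0 (by simp) hψ₂d hb₃
  have hb₂' : ∀ s ∈ Icc (0:ℝ) δ₀, |iteratedDeriv 2 V (a+s) - iteratedDeriv 2 V (a-s) - 12*c₃*s| ≤ (-c₃) * s ^ 1 := by
    intro s hs
    have := hb₂ s hs
    norm_num at this ⊢
    linarith
  have hb₁ := poly_bound _ _ (-c₃) δ₀ 1 (by simp [hD1]) hψ₁d hb₂'
  have hb₁' : ∀ s ∈ Icc (0:ℝ) δ₀, |iteratedDeriv 1 V (a+s) + iteratedDeriv 1 V (a-s) - 6*c₃*s^2| ≤ ((-c₃)/2) * s ^ 2 := by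
    intro s hs
    have := hb₁ s hs
    norm_num at this ⊢
    linarith
  have hb₀ := poly_bound _ _ ((-c₃)/2) δ₀ 2 (by simp) hψ₀d hb₁'
  have hTaylor : ∀ t ∈ Icc (0:ℝ) δ₀, V (a+t) - V (a-t) ≤ c₃ * t^3 := by
    intro t ht
    have h := hb₀ t ht
    norm_num at h
    have h' := (abs_le.1 h).2
    have hpow : 0 ≤ t^3 := pow_nonneg ht.1 3
    nlinarith
  clear hb₂ hb₁ hb₀ hb₂' hb₁' hb₃ hψ₀d hψ₁d hψ₂d hψ₃c hψ₃0 habs hev hδ₁h hc3a hkey hcont3 hVO hsmooth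
  -- geometric constants
  set δ' : ℝ := min δ₀ (a/2) with hδ'def
  have hδ'pos : 0 < δ' := lt_min hδ₀ (by linarith)
  have hδ'a : δ' ≤ a/2 := min_le_right _ _
  have hδ'δ₀ : δ' ≤ δ₀ := min_le_left _ _
  -- the gap η
  obtain ⟨η, hηpos, hη⟩ : ∃ η > 0, ∀ u ∈ Ioi (0:ℝ), δ' ≤ |u - a| → V a + η ≤ V u := by
    have h0 : ∀ᶠ u in 𝓝[>] (0:ℝ), V a + 1 ≤ V u := hV0.eventually (eventually_ge_atTop (V a + 1))
    obtain ⟨ε, hε, hεsub⟩ := mem_nhdsGT_iff_exists_Ioo_subset.1 h0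
    obtain ⟨X, hX⟩ := eventually_atTop.1 (hVinf.eventually (eventually_ge_atTop (V a + 1)))
    have hεpos : (0:ℝ) < ε := hε
    set ε₂ : ℝ := min ε (a - δ') / 2 with hε₂def
    have hε₂pos : 0 < ε₂ := by
      have : 0 < min ε (a - δ') := lt_min hεpos (by linarith)
      positivity
    have hε₂ε : ε₂ < ε := by
      have h1 : min ε (a - δ') ≤ ε := min_le_left _ _
      have : 0 < min ε (a - δ') := lt_min hεpos (by linarith)
      simp only [hε₂def]
      linarith
    have hε₂a : ε₂ ≤ a - δ' := by
      have h1 : min ε (a - δ') ≤ a - δ' := min_le_right _ _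
      have : 0 < min ε (a - δ') := lt_min hεpos (by linarith)
      simp only [hε₂def]
      linarith
    set X₂ : ℝ := max X (a + δ') with hX₂def
    have hK₁sub : Icc ε₂ (a - δ') ⊆ Ioi (0:ℝ) := fun x hx => lt_of_lt_of_le hε₂pos hx.1
    have hK₂sub : Icc (a + δ') X₂ ⊆ Ioi (0:ℝ) := fun x hx => by
      have := hx.1; simp only [mem_Ioi]; linarith
    obtain ⟨u₁, hu₁K, hu₁min⟩ := isCompact_Icc.exists_isMinOn (nonempty_Icc.2 hε₂a) (hcont.mono hK₁sub)
    obtain ⟨u₂, hu₂K, hu₂min⟩ := isCompact_Icc.exists_isMinOn (nonempty_Icc.2 (le_max_right X (a + δ'))) (hcont.mono hK₂sub)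
    have hu₁v : V a < V u₁ := hmin u₁ (hK₁sub hu₁K) (by
      have := hu₁K.2; intro h; rw [h] at this; linarith)
    have hu₂v : V a < V u₂ := hmin u₂ (hK₂sub hu₂K) (by
      have := hu₂K.1; intro h; rw [h] at this; linarith)
    refine ⟨min 1 (min (V u₁ - V a) (V u₂ - V a)), lt_min one_pos (lt_min (by linarith) (by linarith)), ?_⟩
    intro u hu hdist
    have hu0 : (0:ℝ) < u := hu
    have hcases : δ' ≤ u - a ∨ δ' ≤ a - u := by
      rcases abs_cases (u - a) with ⟨h1, _⟩ | ⟨h1, _⟩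
      · left; linarith [hdist, h1]
      · right; linarith [hdist, h1]
    rcases hcases with hcase | hcase
    · -- u ≥ a + δ'
      rcases le_or_gt X u with hXu | hXu
      · have := hX u hXu
        have h1 : min 1 (min (V u₁ - V a) (V u₂ - V a)) ≤ 1 := min_le_left _ _
        linarith
      · have huK : u ∈ Icc (a + δ') X₂ := ⟨by linarith, le_trans hXu.le (le_max_left _ _)⟩
        have := hu₂min huK
        have h1 : min 1 (min (V u₁ - V a) (V u₂ - V a)) ≤ V u₂ - V a :=
          le_trans (min_le_right _ _) (min_le_right _ _)
        simp only [IsMinOn, IsMinFilter] at this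
        have h2 : V u₂ ≤ V u := this
        linarith
    · -- u ≤ a - δ'
      rcases lt_or_ge u ε₂ with huε | huε
      · have : u ∈ Ioo (0:ℝ) ε := ⟨hu0, by linarith⟩
        have := hεsub this
        have h1 : min 1 (min (V u₁ - V a) (V u₂ - V a)) ≤ 1 := min_le_left _ _
        simp only [mem_setOf_eq] at this
        linarith
      · have huK : u ∈ Icc ε₂ (a - δ') := ⟨huε, by linarith⟩
        have := hu₁min huK
        have h1 : min 1 (min (V u₁ - V a) (V u₂ - V a)) ≤ V u₁ - V a :=
          le_trans (min_le_right _ _) (min_le_left _ _)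
        simp only [IsMinOn, IsMinFilter] at this
        have h2 : V u₁ ≤ V u := this
        linarith
  -- continuity radius r'
  obtain ⟨r', hr'pos, hr'⟩ : ∃ r' > 0, ∀ u : ℝ, |u - a| < r' → V u ≤ V a + η/2 := by
    have hca : ContinuousAt V a := hcont.continuousAt (isOpen_Ioi.mem_nhds ha)
    have hev2 : ∀ᶠ u in 𝓝 a, V u < V a + η/2 := hca.tendsto.eventually_lt_const (by linarith)
    obtain ⟨r', hr'pos, h⟩ := Metric.eventually_nhds_iff.1 hev2
    exact ⟨r', hr'pos, fun u hu => (h (by rwa [Real.dist_eq])).le⟩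
  set t₂ : ℝ := min (δ'/2) (r'/2) with ht₂def
  set t₁ : ℝ := t₂/2 with ht₁def
  have ht₂pos : 0 < t₂ := lt_min (by linarith) (by linarith)
  have ht₁pos : 0 < t₁ := by simp only [ht₁def]; linarith
  have ht₁t₂ : t₁ < t₂ := by simp only [ht₁def]; linarith
  have ht₂δ' : t₂ < δ' := lt_of_le_of_lt (min_le_left _ _) (by linarith)
  have ht₂r' : t₂ < r' := lt_of_le_of_lt (min_le_right _ _) (by linarith)
  -- main claim in β
  have hc : (0:ℝ) < -c₃ := by linarith
  set c₁ : ℝ := t₁ * (t₂ - t₁) / 2 with hc₁def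
  set cN : ℝ := 2 * a * a with hcNdef
  have hc₁pos : 0 < c₁ := div_pos (mul_pos ht₁pos (by linarith only [ht₁t₂])) two_pos
  have hcNpos : 0 < cN := mul_pos (mul_pos two_pos ha) ha
  have main : ∀ᶠ β : ℝ in atTop,
      a < (∫ u in Ioi (0:ℝ), u * Real.exp (-β * V u)) /
            (∫ u in Ioi (0:ℝ), Real.exp (-β * V u)) := by
    have h1 : ∀ᶠ β : ℝ in atTop, (1:ℝ) ≤ β := eventually_ge_atTop 1
    have h2 : ∀ᶠ β : ℝ in atTop, 1/((-c₃) * t₁^3) ≤ β := eventually_ge_atTop _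
    have h3 : ∀ᶠ β : ℝ in atTop, Real.exp (-(β * (η/2))) < c₁/cN := by
      have htends : Tendsto (fun β : ℝ => Real.exp (-(β * (η/2)))) atTop (𝓝 0) := by
        apply Real.tendsto_exp_atBot.comp
        have : Tendsto (fun β : ℝ => β * (η/2)) atTop atTop :=
          Tendsto.atTop_mul_const (by linarith) tendsto_id
        exact tendsto_neg_atTop_atBot.comp this
      exact htends.eventually_lt_const (by positivity)
    filter_upwards [h1, h2, h3] with β hβ1 hβ2 hβ3
    have hβpos : (0:ℝ) < β := lt_of_lt_of_le one_pos hβ1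
    obtain ⟨hiF, hiuF⟩ := hint β hβpos
    set F : ℝ → ℝ := fun u => Real.exp (-β * V u) with hFdef
    have hZpos : 0 < ∫ u in Ioi (0:ℝ), F u := by
      rw [setIntegral_pos_iff_support_of_nonneg_ae
        (Filter.Eventually.of_forall fun x => (Real.exp_pos _).le) hiF]
      refine lt_of_lt_of_le ?_ (measure_mono (fun x hx => ⟨?_, hx⟩))
      · rw [Real.volume_Ioi]; exact ENNReal.zero_lt_top
      · simp only [Function.mem_support, hFdef]
        exact Real.exp_ne_zero _
    have hiW : IntegrableOn (fun u => (u - a) * F u) (Ioi (0:ℝ)) := by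
      have h := hiuF.sub (hiF.const_mul a)
      exact IntegrableOn.congr_fun h (fun x _ => by simp [hFdef]; ring) measurableSet_Ioi
    rw [lt_div_iff₀ hZpos]
    have hsplitM : ∫ u in Ioi (0:ℝ), (u - a) * F u
        = (∫ u in Ioi (0:ℝ), u * F u) - a * ∫ u in Ioi (0:ℝ), F u := by
      rw [← integral_const_mul, ← integral_sub hiuF (hiF.const_mul a)]
      exact integral_congr_ae (Filter.Eventually.of_forall fun x => by ring)
    suffices hpos : 0 < ∫ u in Ioi (0:ℝ), (u - a) * F u by linarith only [hpos, hsplitM]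
    -- substitutions
    have hIciIoi : Ici a ⊆ Ioi (0:ℝ) := fun x hx => lt_of_lt_of_le ha hx
    have hIooIoi : Ioo (0:ℝ) a ⊆ Ioi 0 := Ioo_subset_Ioi_self
    have hiW1 : IntegrableOn (fun u => (u - a) * F u) (Ici a) := hiW.mono_set hIciIoi
    have hiW2 : IntegrableOn (fun u => (u - a) * F u) (Ioo 0 a) := hiW.mono_set hIooIoi
    have hdisj : Disjoint (Ioo (0:ℝ) a) (Ici a) := by
      rw [Set.disjoint_left]
      intro x hx1 hx2
      exact absurd hx2 (not_le.2 hx1.2)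
    have hsplit : ∫ u in Ioi (0:ℝ), (u - a) * F u
        = (∫ u in Ioo (0:ℝ) a, (u - a) * F u) + ∫ u in Ici a, (u - a) * F u := by
      rw [← setIntegral_union hdisj measurableSet_Ici hiW2 hiW1, Ioo_union_Ici_eq_Ioi ha]
    have hind1 : ∀ x : ℝ, (Ici a).indicator (fun u => (u - a) * F u) (x + a)
        = (Ici (0:ℝ)).indicator (fun t => t * F (a + t)) x := by
      intro x
      by_cases hx : 0 ≤ x
      · rw [indicator_of_mem (by simp only [mem_Ici]; linarith) (fun u => (u - a) * F u),
          indicator_of_mem (by simpa using hx)]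
        rw [add_comm x a]
        ring_nf
      · rw [indicator_of_notMem (by simp only [mem_Ici]; intro h; exact hx (by linarith)),
          indicator_of_notMem (by simpa using hx)]
    have hA : ∫ u in Ici a, (u - a) * F u = ∫ t in Ioi (0:ℝ), t * F (a + t) := by
      rw [← integral_indicator measurableSet_Ici,
        ← integral_add_right_eq_self ((Ici a).indicator (fun u => (u - a) * F u)) a]
      rw [integral_congr_ae (Filter.Eventually.of_forall hind1)]
      rw [integral_indicator measurableSet_Ici, integral_Ici_eq_integral_Ioi]
    have hiP : IntegrableOn (fun t => t * F (a + t)) (Ioi (0:ℝ)) := by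
      have h1 : Integrable ((Ici a).indicator (fun u => (u - a) * F u)) :=
        (integrable_indicator_iff measurableSet_Ici).2 hiW1
      have h2 := h1.comp_add_right a
      rw [funext hind1] at h2
      exact ((integrable_indicator_iff measurableSet_Ici).1 h2).mono_set Ioi_subset_Ici_self
    have hind2 : ∀ x : ℝ, (Ioo (0:ℝ) a).indicator (fun u => (u - a) * F u) (a - x)
        = (Ioo (0:ℝ) a).indicator (fun t => -(t * F (a - t))) x := by
      intro x
      by_cases hx : x ∈ Ioo (0:ℝ) a
      · rw [indicator_of_mem (by constructor <;> [linarith [hx.2]; linarith [hx.1]] : a - x ∈ Ioo (0:ℝ) a) (fun u => (u - a) * F u),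
          indicator_of_mem hx]
        ring_nf
      · rw [indicator_of_notMem (by
          intro h
          exact hx ⟨by linarith [h.2], by linarith [h.1]⟩),
          indicator_of_notMem hx]
    have hB : ∫ u in Ioo (0:ℝ) a, (u - a) * F u = - ∫ t in Ioo (0:ℝ) a, t * F (a - t) := by
      rw [← integral_indicator measurableSet_Ioo,
        ← integral_comp_const_sub ((Ioo (0:ℝ) a).indicator (fun u => (u - a) * F u)) a]
      rw [integral_congr_ae (Filter.Eventually.of_forall hind2)]
      rw [integral_indicator measurableSet_Ioo, integral_neg]
    have hiM : IntegrableOn (fun t => t * F (a - t)) (Ioo (0:ℝ) a) := by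
      have h1 : Integrable ((Ioo (0:ℝ) a).indicator (fun u => (u - a) * F u)) :=
        (integrable_indicator_iff measurableSet_Ioo).2 hiW2
      have h2 := h1.comp_sub_left a
      rw [funext hind2] at h2
      have h3 := (integrable_indicator_iff measurableSet_Ioo).1 h2
      exact (h3.neg).congr (Filter.Eventually.of_forall fun t => by simp)
    have hiG : IntegrableOn (fun t => t * F (a + t) - t * F (a - t)) (Ioo (0:ℝ) a) :=
      (hiP.mono_set hIooIoi).sub hiM
    have hPnonneg : ∀ᵐ t ∂(volume.restrict (Ioi (0:ℝ))), 0 ≤ t * F (a + t) := by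
      filter_upwards [ae_restrict_mem measurableSet_Ioi] with t ht
      exact mul_nonneg (le_of_lt ht) (Real.exp_pos _).le
    have hmono1 : ∫ t in Ioo (0:ℝ) a, t * F (a + t) ≤ ∫ t in Ioi (0:ℝ), t * F (a + t) :=
      setIntegral_mono_set hiP hPnonneg (HasSubset.Subset.eventuallyLE hIooIoi)
    have hIgeG : ∫ t in Ioo (0:ℝ) a, (t * F (a + t) - t * F (a - t))
        ≤ ∫ u in Ioi (0:ℝ), (u - a) * F u := by
      rw [hsplit, hA, hB, integral_sub (hiP.mono_set hIooIoi) hiM]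
      linarith only [hmono1]
    have hδ'a2 : δ' < a := by linarith only [hδ'a, ha]
    have hGsplit : ∫ t in Ioo (0:ℝ) a, (t * F (a + t) - t * F (a - t))
        = (∫ t in Ioo (0:ℝ) δ', (t * F (a + t) - t * F (a - t)))
          + ∫ t in Ico δ' a, (t * F (a + t) - t * F (a - t)) := by
      have hdisj2 : Disjoint (Ioo (0:ℝ) δ') (Ico δ' a) := by
        rw [Set.disjoint_left]
        intro x hx1 hx2
        exact absurd hx2.1 (not_le.2 hx1.2)
      rw [← setIntegral_union hdisj2 measurableSet_Ico
        (hiG.mono_set (Ioo_subset_Ioo_right hδ'a2.le))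
        (hiG.mono_set (fun x hx => ⟨lt_of_lt_of_le hδ'pos hx.1, hx.2⟩)),
        Ioo_union_Ico_eq_Ioo hδ'pos hδ'a2.le]
    have hGnn : ∀ t ∈ Ioo (0:ℝ) δ', 0 ≤ t * F (a + t) - t * F (a - t) := by
      intro t ht
      have hIcc : t ∈ Icc (0:ℝ) δ₀ := ⟨ht.1.le, le_trans ht.2.le hδ'δ₀⟩
      have hTay := hTaylor t hIcc
      have hVle : V (a + t) ≤ V (a - t) := by
        have hmn : c₃ * t^3 ≤ 0 := mul_nonpos_of_nonpos_of_nonneg hc₃.le (pow_nonneg ht.1.le 3)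
        linarith only [hTay, hmn]
      have hFle : F (a - t) ≤ F (a + t) := Real.exp_le_exp.2 (by
        have := mul_le_mul_of_nonneg_left hVle hβpos.le
        linarith only [this])
      have := mul_le_mul_of_nonneg_left hFle ht.1.le
      linarith only [this]
    have hsub12 : Icc t₁ t₂ ⊆ Ioo (0:ℝ) δ' :=
      fun x hx => ⟨lt_of_lt_of_le ht₁pos hx.1, lt_of_le_of_lt hx.2 ht₂δ'⟩
    have hmono2 : ∫ t in Icc t₁ t₂, (t * F (a + t) - t * F (a - t))
        ≤ ∫ t in Ioo (0:ℝ) δ', (t * F (a + t) - t * F (a - t)) := by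
      apply setIntegral_mono_set (hiG.mono_set (Ioo_subset_Ioo_right hδ'a2.le))
      · filter_upwards [ae_restrict_mem measurableSet_Ioo] with t ht using hGnn t ht
      · exact HasSubset.Subset.eventuallyLE hsub12
    have hlow : ∀ t ∈ Icc t₁ t₂,
        t₁ * (Real.exp (-β * (V a + η/2)) / 2) ≤ t * F (a + t) - t * F (a - t) := by
      intro t ht
      have ht0 : 0 < t := lt_of_lt_of_le ht₁pos ht.1
      have htδ₀ : t ∈ Icc (0:ℝ) δ₀ := ⟨ht0.le, le_trans ht.2 (le_trans ht₂δ'.le hδ'δ₀)⟩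
      have hTay := hTaylor t htδ₀
      have hV1 : V (a + t) ≤ V a + η/2 := by
        apply hr'
        rw [add_sub_cancel_left, abs_of_pos ht0]
        linarith only [ht.2, ht₂r']
      have hd : (-c₃) * t₁^3 ≤ V (a - t) - V (a + t) := by
        have h2 : t₁^3 ≤ t^3 := pow_le_pow_left₀ ht₁pos.le ht.1 3
        have h3 := mul_le_mul_of_nonneg_left h2 hc.le
        linarith only [h3, hTay]
      have hβd : 1 ≤ β * (V (a - t) - V (a + t)) := by
        have h0 : (0:ℝ) < (-c₃) * t₁^3 := by positivity
        have hh1 : (1:ℝ) ≤ β * ((-c₃) * t₁^3) := by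
          calc (1:ℝ) = 1/((-c₃)*t₁^3) * ((-c₃)*t₁^3) := by
                rw [one_div, inv_mul_cancel₀ h0.ne']
          _ ≤ β * ((-c₃)*t₁^3) := mul_le_mul_of_nonneg_right hβ2 h0.le
        calc (1:ℝ) ≤ β * ((-c₃)*t₁^3) := hh1
        _ ≤ β * (V (a-t) - V (a+t)) := mul_le_mul_of_nonneg_left hd hβpos.le
      have hFdiff : Real.exp (-β * (V a + η/2)) / 2 ≤ F (a + t) - F (a - t) := by
        have e1 : F (a - t) = F (a + t) * Real.exp (-(β * (V (a-t) - V (a+t)))) := by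
          simp only [hFdef]
          rw [← Real.exp_add]
          ring_nf
        have e2 : Real.exp (-(β * (V (a-t) - V (a+t)))) ≤ Real.exp (-1 : ℝ) :=
          Real.exp_le_exp.2 (by linarith only [hβd])
        have e3 : Real.exp (-1 : ℝ) ≤ 1/2 := by
          rw [Real.exp_neg]
          have h2 : (2:ℝ) ≤ Real.exp 1 := by
            have := Real.add_one_le_exp (1:ℝ)
            linarith only [this]
          rw [inv_le_comm₀ (Real.exp_pos 1) (by norm_num)]
          linarith only [h2]
        have e4 : Real.exp (-β * (V a + η/2)) ≤ F (a + t) := by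
          apply Real.exp_le_exp.2
          have := mul_le_mul_of_nonneg_left hV1 hβpos.le
          linarith only [this]
        have e5 : (0:ℝ) < F (a + t) := Real.exp_pos _
        have p1 : F (a+t) * Real.exp (-(β * (V (a-t) - V (a+t)))) ≤ F (a+t) * (1/2) :=
          mul_le_mul_of_nonneg_left (e2.trans e3) e5.le
        linarith only [p1, e1, e4]
      calc t₁ * (Real.exp (-β * (V a + η/2)) / 2)
          ≤ t * (F (a + t) - F (a - t)) :=
            mul_le_mul ht.1 hFdiff (by positivity) ht0.le
      _ = t * F (a + t) - t * F (a - t) := by ring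
    have hconst : t₁ * (Real.exp (-β * (V a + η/2)) / 2) * (volume (Icc t₁ t₂)).toReal
        ≤ ∫ t in Icc t₁ t₂, (t * F (a + t) - t * F (a - t)) := by
      apply setIntegral_ge_of_const_le_real measurableSet_Icc
      · rw [Real.volume_Icc]; exact ENNReal.ofReal_ne_top
      · exact hlow
      · exact hiG.mono_set (subset_trans hsub12 (Ioo_subset_Ioo_right hδ'a2.le))
    have hvol : (volume (Icc t₁ t₂)).toReal = t₂ - t₁ := by
      rw [Real.volume_Icc, ENNReal.toReal_ofReal (by linarith)]
    have hneg : -(cN * Real.exp (-β * (V a + η)))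
        ≤ ∫ t in Ico δ' a, (t * F (a + t) - t * F (a - t)) := by
      have hbound : ∀ t ∈ Ico δ' a,
          ‖t * F (a + t) - t * F (a - t)‖ ≤ 2 * a * Real.exp (-β * (V a + η)) := by
        intro t ht
        have ht0 : 0 < t := lt_of_lt_of_le hδ'pos ht.1
        have hta : t < a := ht.2
        have h1 : F (a + t) ≤ Real.exp (-β * (V a + η)) := by
          apply Real.exp_le_exp.2
          have h := hη (a + t) (by simp only [mem_Ioi]; linarith only [ha, ht0])
            (by rw [add_sub_cancel_left, abs_of_pos ht0]; exact ht.1)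
          have := mul_le_mul_of_nonneg_left h hβpos.le
          linarith only [this]
        have h2 : F (a - t) ≤ Real.exp (-β * (V a + η)) := by
          apply Real.exp_le_exp.2
          have habs2 : |a - t - a| = t := by
            rw [show a - t - a = -t by ring, abs_neg, abs_of_pos ht0]
          have h := hη (a - t) (by simp only [mem_Ioi]; linarith only [hta])
            (by rw [habs2]; exact ht.1)
          have := mul_le_mul_of_nonneg_left h hβpos.le
          linarith only [this]
        have hF1 : (0:ℝ) ≤ F (a + t) := (Real.exp_pos _).le
        have hF2 : (0:ℝ) ≤ F (a - t) := (Real.exp_pos _).le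
        have q1 : t * F (a + t) ≤ a * Real.exp (-β * (V a + η)) :=
          mul_le_mul hta.le h1 hF1 ha.le
        have q2 : t * F (a - t) ≤ a * Real.exp (-β * (V a + η)) :=
          mul_le_mul hta.le h2 hF2 ha.le
        have q3 : 0 ≤ t * F (a + t) := mul_nonneg ht0.le hF1
        have q4 : 0 ≤ t * F (a - t) := mul_nonneg ht0.le hF2
        have q5 : 0 ≤ a * Real.exp (-β * (V a + η)) := mul_nonneg ha.le (Real.exp_pos _).le
        rw [Real.norm_eq_abs, abs_le]
        constructor
        · linarith only [q2, q3, q5]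
        · linarith only [q1, q4, q5]
      have h := norm_setIntegral_le_of_norm_le_const (by
          rw [Real.volume_Ico]; exact ENNReal.ofReal_lt_top) hbound
      rw [Real.norm_eq_abs, measureReal_def] at h
      have hvol2 : (volume (Ico δ' a)).toReal = a - δ' := by
        rw [Real.volume_Ico, ENNReal.toReal_ofReal (by linarith)]
      rw [hvol2] at h
      have hCnn : (0:ℝ) ≤ 2 * a * Real.exp (-β * (V a + η)) := by positivity
      have h4 : 2 * a * Real.exp (-β * (V a + η)) * (a - δ') ≤ cN * Real.exp (-β * (V a + η)) := by
        have h5 := mul_le_mul_of_nonneg_left (show a - δ' ≤ a by linarith only [hδ'pos]) hCnn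
        simp only [hcNdef]
        linarith only [h5]
      have := abs_le.1 h
      linarith only [this.1, h4]
    -- final assembly
    have hexps : Real.exp (-β * (V a + η))
        = Real.exp (-β * (V a + η/2)) * Real.exp (-(β * (η/2))) := by
      rw [← Real.exp_add]
      ring_nf
    have hkeyineq : cN * Real.exp (-β * (V a + η)) < c₁ * Real.exp (-β * (V a + η/2)) := by
      rw [hexps]
      calc cN * (Real.exp (-β * (V a + η/2)) * Real.exp (-(β * (η/2))))
          < cN * (Real.exp (-β * (V a + η/2)) * (c₁/cN)) := by
            apply mul_lt_mul_of_pos_left _ hcNpos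
            exact mul_lt_mul_of_pos_left hβ3 (Real.exp_pos _)
      _ = c₁ * Real.exp (-β * (V a + η/2)) := by field_simp
    have hfin : c₁ * Real.exp (-β * (V a + η/2))
        = t₁ * (Real.exp (-β * (V a + η/2)) / 2) * (t₂ - t₁) := by
      simp only [hc₁def]; ring
    rw [hGsplit] at hIgeG
    rw [hvol] at hconst
    linarith only [hmono2, hconst, hneg, hIgeG, hkeyineq, hfin.le, hfin.ge]
  exact tendsto_inv_nhdsGT_zero.eventually main
end

section
/- Let V : (0,∞) → ℝ be continuous with V(u) → ∞ as u → 0⁺ and as u → ∞, such that u ↦ exp(-βV(u)) and u ↦ u·exp(-βV(u)) are integrable on (0,∞) for every β > 0, and such that V attains its global minimum at a unique point a > 0, where it is twice continuously differentiable with V''(a) > 0. Then the mean spacing converges to the ground-state spacing at zero temperature: m(T) → a as T → 0⁺. -/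
open MeasureTheory Set Filter Topology

private lemma abs_integrable (V : ℝ → ℝ) (a β : ℝ) (ha : 0 < a)
    (h1 : IntegrableOn (fun u => Real.exp (-β * V u)) (Ioi 0))
    (h2 : IntegrableOn (fun u => u * Real.exp (-β * V u)) (Ioi 0)) :
    IntegrableOn (fun u => |u - a| * Real.exp (-β * V u)) (Ioi 0) := by
  have hmeas : AEStronglyMeasurable (fun u => |u - a| * Real.exp (-β * V u))
      (volume.restrict (Ioi 0)) :=
    ((continuous_id.sub continuous_const).abs.aestronglyMeasurable).mul
      h1.aestronglyMeasurable
  refine Integrable.mono (h2.add (h1.const_mul a)) hmeas ?_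
  rw [ae_restrict_iff' measurableSet_Ioi]
  refine Eventually.of_forall fun u hu => ?_
  have hu0 : (0:ℝ) < u := hu
  have he : (0:ℝ) < Real.exp (-β * V u) := Real.exp_pos _
  have h3 : |u - a| ≤ u + a := by
    calc |u - a| ≤ |u| + |a| := abs_sub _ _
    _ = u + a := by rw [abs_of_pos hu0, abs_of_pos ha]
  simp only [Pi.add_apply]
  calc ‖|u - a| * Real.exp (-β * V u)‖ = |u - a| * Real.exp (-β * V u) := by
        rw [Real.norm_eq_abs, abs_of_nonneg (mul_nonneg (abs_nonneg _) he.le)]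
    _ ≤ u * Real.exp (-β * V u) + a * Real.exp (-β * V u) := by nlinarith
    _ ≤ ‖u * Real.exp (-β * V u) + a * Real.exp (-β * V u)‖ := le_abs_self _

private lemma mean_spacing_aux
    (V : ℝ → ℝ) (a : ℝ)
    (hcont : ContinuousOn V (Ioi 0))
    (hV0 : Tendsto V (𝓝[>] 0) atTop)
    (hVinf : Tendsto V atTop atTop)
    (hint : ∀ β : ℝ, 0 < β →
      IntegrableOn (fun u => Real.exp (-β * V u)) (Ioi 0) ∧
      IntegrableOn (fun u => u * Real.exp (-β * V u)) (Ioi 0))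
    (ha : 0 < a)
    (hmin : ∀ u ∈ Ioi (0:ℝ), u ≠ a → V a < V u) :
    Tendsto (fun β : ℝ =>
        (∫ u in Ioi (0:ℝ), u * Real.exp (-β * V u)) /
          (∫ u in Ioi (0:ℝ), Real.exp (-β * V u)))
      atTop (𝓝 a) := by
  set M := V a with hM
  rw [Metric.tendsto_nhds]
  intro ε hε
  set ε2 : ℝ := min (ε/3) (a/2) with hε2def
  have hε2 : 0 < ε2 := lt_min (by linarith) (by linarith)
  have hε2a : ε2 ≤ a/2 := min_le_right _ _
  have hε2e : ε2 ≤ ε/3 := min_le_left _ _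
  -- low end bound
  obtain ⟨r, hr0, hrlow⟩ : ∃ r > 0, ∀ u ∈ Ioo (0:ℝ) r, M + 1 ≤ V u := by
    have h := hV0.eventually (eventually_ge_atTop (M+1))
    rw [eventually_nhdsWithin_iff, Metric.eventually_nhds_iff] at h
    obtain ⟨r, hr0, hr⟩ := h
    refine ⟨r, hr0, fun u hu => hr ?_ hu.1⟩
    rw [Real.dist_eq, sub_zero, abs_of_pos hu.1]
    exact hu.2
  -- high end bound
  obtain ⟨R, hRbig⟩ : ∃ R : ℝ, ∀ u ≥ R, M + 1 ≤ V u :=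
    eventually_atTop.mp (hVinf.eventually (eventually_ge_atTop (M+1)))
  -- window and gap
  set S : Set ℝ := Ioo (a - ε2) (a + ε2) with hSdef
  have hSsub : S ⊆ Ioi 0 := by
    intro u hu
    have := hu.1
    simp only [mem_Ioi]
    linarith
  obtain ⟨η, hη0, hη1, hgap⟩ : ∃ η > 0, η ≤ 1 ∧ ∀ u ∈ Ioi (0:ℝ) \ S, M + η ≤ V u := by
    set Kc : Set ℝ := Icc r R \ S with hKc
    have hKcomp : IsCompact Kc := isCompact_Icc.diff isOpen_Ioo
    have hKsub : Kc ⊆ Ioi 0 := fun u hu => lt_of_lt_of_le hr0 hu.1.1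
    have key : ∀ η ≤ 1, 0 < η → (∀ u ∈ Kc, M + η ≤ V u) →
        ∀ u ∈ Ioi (0:ℝ) \ S, M + η ≤ V u := by
      intro η hη1 hη0 hK u hu
      rcases lt_or_ge u r with h1 | h1
      · exact le_trans (by linarith) (hrlow u ⟨hu.1, h1⟩)
      rcases le_or_gt u R with h2 | h2
      · exact hK u ⟨⟨h1, h2⟩, hu.2⟩
      · exact le_trans (by linarith) (hRbig u h2.le)
    rcases Kc.eq_empty_or_nonempty with hE | hNE
    · refine ⟨1, one_pos, le_refl _, key 1 le_rfl one_pos ?_⟩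
      intro u hu; rw [hE] at hu; exact absurd hu (notMem_empty u)
    · obtain ⟨x₀, hx₀K, hx₀min⟩ := hKcomp.exists_isMinOn hNE (hcont.mono hKsub)
      have hx₀a : x₀ ≠ a := by
        intro h; exact hx₀K.2 (h ▸ ⟨by linarith, by linarith⟩)
      have hx₀V : M < V x₀ := hmin x₀ (hKsub hx₀K) hx₀a
      refine ⟨min 1 (V x₀ - M), lt_min one_pos (by linarith), min_le_left _ _,
        key _ (min_le_left _ _) (lt_min one_pos (by linarith)) ?_⟩
      intro u hu
      have := hx₀min hu
      have h2 : min 1 (V x₀ - M) ≤ V x₀ - M := min_le_right _ _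
      simp only [mem_setOf_eq] at this
      linarith
  -- continuity window for denominator lower bound
  obtain ⟨δ, hδ0, hδa, hJbd⟩ : ∃ δ > 0, δ ≤ a/2 ∧ ∀ u ∈ Ioo (a - δ) (a + δ), V u ≤ M + η/2 := by
    have hca : ContinuousAt V a := hcont.continuousAt (isOpen_Ioi.mem_nhds ha)
    have h : ∀ᶠ u in 𝓝 a, V u < M + η/2 := hca.eventually_lt_const (by linarith)
    rw [Metric.eventually_nhds_iff] at h
    obtain ⟨δ0, hδ00, hδ⟩ := h
    refine ⟨min (δ0/2) (a/2), lt_min (by linarith) (by linarith), min_le_right _ _, ?_⟩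
    intro u hu
    have h1 : |u - a| < δ0 := by
      have := hu.1; have := hu.2
      have hm : min (δ0/2) (a/2) ≤ δ0/2 := min_le_left _ _
      rw [abs_lt]; constructor <;> linarith
    exact (hδ (by rwa [Real.dist_eq])).le
  set J : Set ℝ := Ioo (a - δ) (a + δ) with hJdef
  have hJsub : J ⊆ Ioi 0 := by
    intro u hu
    have := hu.1
    simp only [mem_Ioi]
    linarith
  set K : Set ℝ := Ioi 0 \ S with hKdef
  have hKmeas : MeasurableSet K := measurableSet_Ioi.diff measurableSet_Ioo
  -- base integrability at β = 1
  obtain ⟨hI1e, hI1ue⟩ := hint 1 one_pos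
  have hI1abs : IntegrableOn (fun u => |u - a| * Real.exp (-1 * V u)) (Ioi 0) :=
    abs_integrable V a 1 ha hI1e hI1ue
  set I₁ : ℝ := ∫ u in Ioi (0:ℝ), |u - a| * Real.exp (-1 * V u) with hI₁def
  have hI₁nn : 0 ≤ I₁ :=
    setIntegral_nonneg measurableSet_Ioi fun u _ =>
      mul_nonneg (abs_nonneg _) (Real.exp_pos _).le
  -- the tail quotient tends to 0
  have htail : Tendsto (fun β : ℝ =>
      Real.exp (-(β-1)*(M+η)) * I₁ / (2*δ*Real.exp (-β*(M+η/2)))) atTop (𝓝 0) := by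
    have hid : ∀ β : ℝ, Real.exp (-(β-1)*(M+η)) * I₁ / (2*δ*Real.exp (-β*(M+η/2)))
        = (I₁/(2*δ)) * Real.exp ((M+η) - β*(η/2)) := by
      intro β
      rw [show -(β-1)*(M+η) = ((M+η) - β*(η/2)) + (-β*(M+η/2)) by ring, Real.exp_add]
      have h1 : Real.exp (-β*(M+η/2)) ≠ 0 := Real.exp_ne_zero _
      field_simp
    simp only [hid]
    rw [show (0:ℝ) = (I₁/(2*δ)) * 0 by ring]
    refine Tendsto.const_mul _ ?_
    refine Real.tendsto_exp_atBot.comp ?_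
    have h2 : Tendsto (fun β : ℝ => β * (η/2)) atTop atTop :=
      Tendsto.atTop_mul_const (by linarith) tendsto_id
    have h3 := tendsto_neg_atTop_atBot.comp h2
    have h4 := tendsto_atBot_add_const_left atTop (M+η) h3
    refine Tendsto.congr (fun β => ?_) h4
    simp only [Function.comp_apply]
    ring
  have hev1 : ∀ᶠ β : ℝ in atTop,
      Real.exp (-(β-1)*(M+η)) * I₁ / (2*δ*Real.exp (-β*(M+η/2))) < ε/2 :=
    htail.eventually_lt_const (by linarith)
  filter_upwards [hev1, eventually_ge_atTop (1:ℝ)] with β htβ hβ1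
  have hβ0 : (0:ℝ) < β := lt_of_lt_of_le one_pos hβ1
  obtain ⟨hIe, hIue⟩ := hint β hβ0
  have hIabs : IntegrableOn (fun u => |u - a| * Real.exp (-β * V u)) (Ioi 0) :=
    abs_integrable V a β ha hIe hIue
  set D : ℝ := ∫ u in Ioi (0:ℝ), Real.exp (-β * V u) with hDdef
  set N : ℝ := ∫ u in Ioi (0:ℝ), u * Real.exp (-β * V u) with hNdef
  -- denominator lower bound
  have hDlow : 2*δ*Real.exp (-β*(M+η/2)) ≤ D := by
    have step1 : ∫ u in J, Real.exp (-β*(M+η/2)) ≤ ∫ u in J, Real.exp (-β * V u) := by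
      refine setIntegral_mono_on (integrableOn_const (C := Real.exp (-β*(M+η/2))) ?_)
        (hIe.mono_set hJsub) measurableSet_Ioo ?_
      · rw [Real.volume_Ioo]; exact ENNReal.ofReal_ne_top
      · intro u hu
        exact Real.exp_le_exp.mpr (by nlinarith [hJbd u hu])
    have step2 : ∫ u in J, Real.exp (-β * V u) ≤ D := by
      refine setIntegral_mono_set hIe ?_ (HasSubset.Subset.eventuallyLE hJsub)
      exact Eventually.of_forall fun u => (Real.exp_pos _).le
    have step0 : (∫ u in J, Real.exp (-β*(M+η/2))) = 2*δ*Real.exp (-β*(M+η/2)) := by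
      rw [setIntegral_const, Real.volume_real_Ioo_of_le (by linarith),
        smul_eq_mul]
      ring
    linarith
  have hDpos : 0 < D :=
    lt_of_lt_of_le (by positivity) hDlow
  -- tail bound
  have htailbd : ∫ u in K, |u - a| * Real.exp (-β * V u)
      ≤ Real.exp (-(β-1)*(M+η)) * I₁ := by
    have step1 : ∫ u in K, |u - a| * Real.exp (-β * V u)
        ≤ ∫ u in K, Real.exp (-(β-1)*(M+η)) * (|u - a| * Real.exp (-1 * V u)) := by
      refine setIntegral_mono_on (hIabs.mono_set diff_subset)
        (IntegrableOn.mono_set (hI1abs.const_mul _) diff_subset) hKmeas ?_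
      intro u hu
      have hVu : M + η ≤ V u := hgap u hu
      have h5 : Real.exp (-(β-1) * V u) ≤ Real.exp (-(β-1)*(M+η)) :=
        Real.exp_le_exp.mpr (by nlinarith)
      have h6 : Real.exp (-β * V u) = Real.exp (-(β-1) * V u) * Real.exp (-1 * V u) := by
        rw [← Real.exp_add]; ring_nf
      rw [h6]
      have h7 := (Real.exp_pos (-1 * V u)).le
      have h8 := abs_nonneg (u - a)
      have h9 := mul_le_mul_of_nonneg_left (mul_le_mul_of_nonneg_right h5 h7) h8
      linarith [h9, (by ring : |u - a| * (Real.exp (-(β-1)*(M+η)) * Real.exp (-1 * V u))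
        = Real.exp (-(β-1)*(M+η)) * (|u - a| * Real.exp (-1 * V u)))]
    have step2 : ∫ u in K, Real.exp (-(β-1)*(M+η)) * (|u - a| * Real.exp (-1 * V u))
        = Real.exp (-(β-1)*(M+η)) * ∫ u in K, |u - a| * Real.exp (-1 * V u) :=
      integral_const_mul _ _
    have step3 : ∫ u in K, |u - a| * Real.exp (-1 * V u) ≤ I₁ := by
      refine setIntegral_mono_set hI1abs ?_
        (HasSubset.Subset.eventuallyLE diff_subset)
      exact Eventually.of_forall fun u => mul_nonneg (abs_nonneg _) (Real.exp_pos _).le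
    calc ∫ u in K, |u - a| * Real.exp (-β * V u)
        ≤ Real.exp (-(β-1)*(M+η)) * ∫ u in K, |u - a| * Real.exp (-1 * V u) := by
          rw [← step2]; exact step1
      _ ≤ Real.exp (-(β-1)*(M+η)) * I₁ :=
          mul_le_mul_of_nonneg_left step3 (Real.exp_pos _).le
  -- near bound
  have hnearbd : ∫ u in S, |u - a| * Real.exp (-β * V u) ≤ ε2 * D := by
    have step1 : ∫ u in S, |u - a| * Real.exp (-β * V u)
        ≤ ∫ u in S, ε2 * Real.exp (-β * V u) := by
      refine setIntegral_mono_on (hIabs.mono_set hSsub)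
        (IntegrableOn.mono_set (hIe.const_mul _) hSsub) measurableSet_Ioo ?_
      intro u hu
      have h1 : |u - a| ≤ ε2 := by
        rw [abs_le]; exact ⟨by linarith [hu.1], by linarith [hu.2]⟩
      exact mul_le_mul_of_nonneg_right h1 (Real.exp_pos _).le
    have step2 : ∫ u in S, ε2 * Real.exp (-β * V u) = ε2 * ∫ u in S, Real.exp (-β * V u) :=
      integral_const_mul _ _
    have step3 : ∫ u in S, Real.exp (-β * V u) ≤ D := by
      refine setIntegral_mono_set hIe ?_ (HasSubset.Subset.eventuallyLE hSsub)
      exact Eventually.of_forall fun u => (Real.exp_pos _).le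
    calc ∫ u in S, |u - a| * Real.exp (-β * V u)
        ≤ ε2 * ∫ u in S, Real.exp (-β * V u) := by rw [← step2]; exact step1
      _ ≤ ε2 * D := mul_le_mul_of_nonneg_left step3 hε2.le
  -- splitting
  have hsplit : ∫ u in Ioi (0:ℝ), |u - a| * Real.exp (-β * V u)
      = (∫ u in S, |u - a| * Real.exp (-β * V u))
        + ∫ u in K, |u - a| * Real.exp (-β * V u) := by
    have hUn : S ∪ K = Ioi 0 := union_diff_cancel hSsub
    rw [← hUn]
    exact setIntegral_union disjoint_sdiff_right hKmeas
      (hIabs.mono_set hSsub) (hIabs.mono_set diff_subset)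
  -- numerator identity
  have hnum : N - a * D = ∫ u in Ioi (0:ℝ), (u - a) * Real.exp (-β * V u) := by
    have : (∫ u in Ioi (0:ℝ), (u - a) * Real.exp (-β * V u))
        = (∫ u in Ioi (0:ℝ), u * Real.exp (-β * V u))
          - ∫ u in Ioi (0:ℝ), a * Real.exp (-β * V u) := by
      rw [← integral_sub hIue (hIe.const_mul a)]
      congr 1 with u
      ring
    rw [this, integral_const_mul]
  have habs : |N - a * D| ≤ ∫ u in Ioi (0:ℝ), |u - a| * Real.exp (-β * V u) := by
    rw [hnum]
    calc |∫ u in Ioi (0:ℝ), (u - a) * Real.exp (-β * V u)|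
        = ‖∫ u in Ioi (0:ℝ), (u - a) * Real.exp (-β * V u)‖ := (Real.norm_eq_abs _).symm
      _ ≤ ∫ u in Ioi (0:ℝ), ‖(u - a) * Real.exp (-β * V u)‖ :=
          norm_integral_le_integral_norm _
      _ = ∫ u in Ioi (0:ℝ), |u - a| * Real.exp (-β * V u) := by
          congr 1 with u
          rw [Real.norm_eq_abs, abs_mul, Real.abs_exp]
  -- combine
  have hnumbd : |N - a * D| ≤ ε2 * D + Real.exp (-(β-1)*(M+η)) * I₁ := by
    rw [hsplit] at habs
    linarith
  have hT : 0 ≤ Real.exp (-(β-1)*(M+η)) * I₁ := mul_nonneg (Real.exp_pos _).le hI₁nn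
  have hDl : 0 < 2*δ*Real.exp (-β*(M+η/2)) := by positivity
  have hfinal : |N / D - a| ≤ ε2 + Real.exp (-(β-1)*(M+η)) * I₁ / (2*δ*Real.exp (-β*(M+η/2))) := by
    have h1 : N / D - a = (N - a * D) / D := by field_simp
    calc |N / D - a| = |N - a * D| / D := by rw [h1, abs_div, abs_of_pos hDpos]
      _ ≤ (ε2 * D + Real.exp (-(β-1)*(M+η)) * I₁) / D := by gcongr
      _ = ε2 + Real.exp (-(β-1)*(M+η)) * I₁ / D := by
          rw [add_div, mul_div_assoc, div_self hDpos.ne', mul_one]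
      _ ≤ ε2 + Real.exp (-(β-1)*(M+η)) * I₁ / (2*δ*Real.exp (-β*(M+η/2))) := by gcongr
  rw [Real.dist_eq]
  have hlast : ε2 + Real.exp (-(β-1)*(M+η)) * I₁ / (2*δ*Real.exp (-β*(M+η/2))) < ε := by
    linarith
  exact lt_of_le_of_lt hfinal hlast

/-- **Zero-temperature limit of the mean spacing.**
For a potential with a unique nondegenerate global minimum at `a > 0`, the mean spacing
converges to the ground-state spacing: `m(T) → a` as `T → 0⁺`. -/
theorem mean_spacing_tendsto_ground_state
    (V : ℝ → ℝ) (a : ℝ)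
    (hcont : ContinuousOn V (Ioi 0))
    (hV0 : Tendsto V (𝓝[>] 0) atTop)
    (hVinf : Tendsto V atTop atTop)
    (hint : ∀ β : ℝ, 0 < β →
      IntegrableOn (fun u => Real.exp (-β * V u)) (Ioi 0) ∧
      IntegrableOn (fun u => u * Real.exp (-β * V u)) (Ioi 0))
    (ha : 0 < a)
    (hmin : ∀ u ∈ Ioi (0:ℝ), u ≠ a → V a < V u)
    (hsmooth : ContDiffAt ℝ 2 V a)
    (hV2 : 0 < iteratedDeriv 2 V a) :
    Tendsto (fun T : ℝ =>
        (∫ u in Ioi (0:ℝ), u * Real.exp (-T⁻¹ * V u)) /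
          (∫ u in Ioi (0:ℝ), Real.exp (-T⁻¹ * V u)))
      (𝓝[>] 0) (𝓝 a) := by
  exact (mean_spacing_aux V a hcont hV0 hVinf hint ha hmin).comp tendsto_inv_nhdsGT_zero
end

section
/- Let V : (0,∞) → ℝ be continuous with V(u) → ∞ as u → 0⁺ and as u → ∞, such that for every β > 0 the functions u ↦ exp(-βV(u)), u ↦ u·exp(-βV(u)), u ↦ V(u)·exp(-βV(u)) and u ↦ u·V(u)·exp(-βV(u)) are integrable on (0,∞). Then the function β ↦ m̃(β) = (∫₀^∞ u·exp(-βV(u)) du)/(∫₀^∞ exp(-βV(u)) du) is differentiable on (0,∞), and its derivative equals minus the Gibbs covariance of u and V(u): dm̃/dβ = -(⟨u·V(u)⟩_β - ⟨u⟩_β·⟨V(u)⟩_β), where ⟨f⟩_β = (∫₀^∞ f(u)·exp(-βV(u)) du)/(∫₀^∞ exp(-βV(u)) du). -/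
open MeasureTheory Set Filter Topology

private lemma gibbs_hasDerivAt
    (V w : ℝ → ℝ) (β : ℝ) (hβ : 0 < β)
    (h1 : ∀ b : ℝ, 0 < b → IntegrableOn (fun u => w u * Real.exp (-b * V u)) (Ioi 0))
    (h2 : ∀ b : ℝ, 0 < b → IntegrableOn (fun u => w u * V u * Real.exp (-b * V u)) (Ioi 0)) :
    HasDerivAt (fun b : ℝ => ∫ u in Ioi (0:ℝ), w u * Real.exp (-b * V u))
      (-∫ u in Ioi (0:ℝ), w u * V u * Real.exp (-β * V u)) β := by
  set μ := (volume : Measure ℝ).restrict (Ioi 0)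
  set F : ℝ → ℝ → ℝ := fun b u => w u * Real.exp (-b * V u) with hF
  set F' : ℝ → ℝ → ℝ := fun b u => -(w u * V u * Real.exp (-b * V u)) with hF'
  set bound : ℝ → ℝ := fun u =>
    |w u * V u| * Real.exp (-(β/2) * V u) + |w u * V u| * Real.exp (-(3*β/2) * V u)
    with hbound
  have hb1 : (0:ℝ) < β/2 := by linarith
  have hb2 : (0:ℝ) < 3*β/2 := by linarith
  have habs : ∀ b : ℝ, 0 < b →
      Integrable (fun u => |w u * V u| * Real.exp (-b * V u)) μ := by
    intro b hb
    have := (h2 b hb).abs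
    refine this.congr (Eventually.of_forall fun u => ?_)
    simp only [abs_mul, abs_of_pos (Real.exp_pos _)]
  have key := hasDerivAt_integral_of_dominated_loc_of_deriv_le (F := F) (F' := F')
    (bound := bound) (μ := μ) (x₀ := β) (Metric.ball_mem_nhds β (half_pos hβ))
    (by
      filter_upwards [eventually_gt_nhds hβ] with b hb
      exact (h1 b hb).aestronglyMeasurable)
    (h1 β hβ)
    (by
      have := ((h2 β hβ).neg).aestronglyMeasurable
      exact this)
    (by
      refine Eventually.of_forall fun u => fun b hb => ?_
      have hball : β/2 ≤ b ∧ b ≤ 3*β/2 := by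
        rw [Metric.mem_ball, Real.dist_eq, abs_lt] at hb
        constructor <;> linarith [hb.1, hb.2]
      have hexp : Real.exp (-b * V u) ≤
          Real.exp (-(β/2) * V u) + Real.exp (-(3*β/2) * V u) := by
        rcases le_or_gt 0 (V u) with hVu | hVu
        · have : Real.exp (-b * V u) ≤ Real.exp (-(β/2) * V u) := by
            apply Real.exp_le_exp.2
            nlinarith [hball.1]
          linarith [Real.exp_pos (-(3*β/2) * V u)]
        · have : Real.exp (-b * V u) ≤ Real.exp (-(3*β/2) * V u) := by
            apply Real.exp_le_exp.2
            nlinarith [hball.2]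
          linarith [Real.exp_pos (-(β/2) * V u)]
      have : ‖F' b u‖ = |w u * V u| * Real.exp (-b * V u) := by
        simp [hF', abs_mul, abs_of_pos (Real.exp_pos _)]
      rw [this, hbound]
      have h0 : (0:ℝ) ≤ |w u * V u| := abs_nonneg _
      nlinarith [hexp]
      )
    ((habs _ hb1).add (habs _ hb2))
    (by
      refine Eventually.of_forall fun u => fun b _ => ?_
      have hd : HasDerivAt (fun x : ℝ => -x * V u) (-V u) b := by
        simpa [neg_mul, Pi.neg_def] using ((hasDerivAt_id b).mul_const (V u)).neg
      have := (hd.exp).const_mul (w u)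
      convert this using 1
      · rfl
      simp only [hF']
      ring)
  have := key.2
  rwa [show ∫ u, F' β u ∂μ = -∫ u in Ioi (0:ℝ), w u * V u * Real.exp (-β * V u) by
    simp [hF', integral_neg, μ]] at this

/-- **Derivative of the mean spacing in inverse temperature.**
The mean spacing `m̃(β) = ⟨u⟩_β` is differentiable on `(0,∞)` with derivative equal to minus
the Gibbs covariance of `u` and `V(u)`:
`dm̃/dβ = -(⟨u·V(u)⟩_β - ⟨u⟩_β·⟨V(u)⟩_β)`. -/
theorem mean_spacing_deriv_eq_neg_covariance
    (V : ℝ → ℝ)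
    (hcont : ContinuousOn V (Ioi 0))
    (hV0 : Tendsto V (𝓝[>] 0) atTop)
    (hVinf : Tendsto V atTop atTop)
    (hint : ∀ β : ℝ, 0 < β →
      IntegrableOn (fun u => Real.exp (-β * V u)) (Ioi 0) ∧
      IntegrableOn (fun u => u * Real.exp (-β * V u)) (Ioi 0) ∧
      IntegrableOn (fun u => V u * Real.exp (-β * V u)) (Ioi 0) ∧
      IntegrableOn (fun u => u * V u * Real.exp (-β * V u)) (Ioi 0)) :
    ∀ β : ℝ, 0 < β →
      HasDerivAt
        (fun b : ℝ =>
          (∫ u in Ioi (0:ℝ), u * Real.exp (-b * V u)) /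
            (∫ u in Ioi (0:ℝ), Real.exp (-b * V u)))
        (-((∫ u in Ioi (0:ℝ), u * V u * Real.exp (-β * V u)) /
              (∫ u in Ioi (0:ℝ), Real.exp (-β * V u)) -
            ((∫ u in Ioi (0:ℝ), u * Real.exp (-β * V u)) /
                (∫ u in Ioi (0:ℝ), Real.exp (-β * V u))) *
              ((∫ u in Ioi (0:ℝ), V u * Real.exp (-β * V u)) /
                (∫ u in Ioi (0:ℝ), Real.exp (-β * V u)))))
        β := by
  intro β hβ
  -- derivative of the numerator
  have hN : HasDerivAt (fun b : ℝ => ∫ u in Ioi (0:ℝ), u * Real.exp (-b * V u))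
      (-∫ u in Ioi (0:ℝ), u * V u * Real.exp (-β * V u)) β :=
    gibbs_hasDerivAt V id β hβ (fun b hb => (hint b hb).2.1) (fun b hb => (hint b hb).2.2.2)
  -- derivative of the denominator
  have hZ : HasDerivAt (fun b : ℝ => ∫ u in Ioi (0:ℝ), Real.exp (-b * V u))
      (-∫ u in Ioi (0:ℝ), V u * Real.exp (-β * V u)) β := by
    have := gibbs_hasDerivAt V (fun _ => 1) β hβ
      (fun b hb => by simpa using (hint b hb).1)
      (fun b hb => by simpa using (hint b hb).2.2.1)
    simpa using this
  -- positivity of the partition function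
  have hZpos : 0 < ∫ u in Ioi (0:ℝ), Real.exp (-β * V u) := by
    rw [setIntegral_pos_iff_support_of_nonneg_ae
      (Eventually.of_forall fun u => (Real.exp_pos _).le) (hint β hβ).1]
    have : (Function.support fun u => Real.exp (-β * V u)) = univ := by
      ext u; simp [Function.mem_support, (Real.exp_pos _).ne']
    rw [this, univ_inter]
    simp
  have hZne : (∫ u in Ioi (0:ℝ), Real.exp (-β * V u)) ≠ 0 := ne_of_gt hZpos
  set Z := ∫ u in Ioi (0:ℝ), Real.exp (-β * V u) with hZdef
  set N := ∫ u in Ioi (0:ℝ), u * Real.exp (-β * V u) with hNdef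
  set A := ∫ u in Ioi (0:ℝ), u * V u * Real.exp (-β * V u) with hAdef
  set B := ∫ u in Ioi (0:ℝ), V u * Real.exp (-β * V u) with hBdef
  have heq : -(A / Z - N / Z * (B / Z)) = (-A * Z - N * -B) / Z ^ 2 := by
    field_simp
    ring
  rw [heq]
  exact hN.div hZ hZne
end

section
/- Fix β > 0 and let V : (0,∞) → ℝ be continuous with V(u) → ∞ as u → 0⁺, such that there exists F₀ > 0 so that for all F with |F| < F₀ the functions u ↦ exp(-β(V(u) - Fu)), u ↦ u·exp(-β(V(u) - Fu)), and u ↦ u²·exp(-β(V(u) - Fu)) are integrable on (0,∞). Then the function F ↦ m(T,F) is differentiable at F = 0, and its derivative (the elastic modulus) equals R = ∂m(T,F)/∂F|_{F=0} = β·(⟨u²⟩ - ⟨u⟩²), where ⟨f⟩ = (∫₀^∞ f(u)·exp(-βV(u)) du)/(∫₀^∞ exp(-βV(u)) du); moreover R > 0. -/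
open MeasureTheory Set Filter Topology

lemma aux_deriv (β F₀ : ℝ) (hβ : 0 < β) (hF₀ : 0 < F₀) (V g : ℝ → ℝ)
    (hg : ∀ u ∈ Ioi (0:ℝ), 0 ≤ g u)
    (hint1 : ∀ F : ℝ, |F| < F₀ →
      IntegrableOn (fun u => g u * Real.exp (-β * (V u - F * u))) (Ioi 0))
    (hint2 : ∀ F : ℝ, |F| < F₀ →
      IntegrableOn (fun u => u * g u * Real.exp (-β * (V u - F * u))) (Ioi 0)) :
    HasDerivAt (fun F : ℝ => ∫ u in Ioi (0:ℝ), g u * Real.exp (-β * (V u - F * u)))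
      (∫ u in Ioi (0:ℝ), β * (u * g u * Real.exp (-β * (V u - 0 * u)))) 0 := by
  have h0 : |(0:ℝ)| < F₀ := by simpa using hF₀
  have hhalf : |F₀ / 2| < F₀ := by
    rw [abs_of_pos (by linarith)]; linarith
  have := hasDerivAt_integral_of_dominated_loc_of_deriv_le
    (F := fun (x : ℝ) (a : ℝ) => g a * Real.exp (-β * (V a - x * a)))
    (F' := fun (x : ℝ) (a : ℝ) => β * (a * g a * Real.exp (-β * (V a - x * a))))
    (x₀ := (0:ℝ)) (μ := volume.restrict (Ioi 0))
    (bound := fun a => β * (a * g a * Real.exp (-β * (V a - (F₀ / 2) * a))))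
    (s := Metric.ball (0:ℝ) (F₀ / 2)) (Metric.ball_mem_nhds _ (by linarith))
    ?_ (hint1 0 h0) ?_ ?_ ((hint2 (F₀/2) hhalf).const_mul β) ?_
  · exact this.2
  · filter_upwards [Metric.ball_mem_nhds (0:ℝ) hF₀] with x hx
    rw [Metric.mem_ball, dist_zero_right, Real.norm_eq_abs] at hx
    exact (hint1 x hx).aestronglyMeasurable
  · exact ((hint2 0 h0).aestronglyMeasurable).const_mul β
  · filter_upwards [ae_restrict_mem measurableSet_Ioi] with a ha x hx
    rw [Metric.mem_ball, dist_zero_right, Real.norm_eq_abs] at hx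
    have ha' : (0:ℝ) < a := ha
    have hga := hg a ha
    have hexp : Real.exp (-β * (V a - x * a)) ≤ Real.exp (-β * (V a - (F₀/2) * a)) := by
      apply Real.exp_le_exp.2
      have : x * a ≤ (F₀ / 2) * a := by
        apply mul_le_mul_of_nonneg_right _ ha'.le
        exact le_of_lt (lt_of_le_of_lt (le_abs_self x) hx)
      nlinarith
    rw [Real.norm_eq_abs, abs_of_nonneg (by positivity)]
    have : a * g a * Real.exp (-β * (V a - x * a)) ≤
        a * g a * Real.exp (-β * (V a - (F₀/2) * a)) := by
      apply mul_le_mul_of_nonneg_left hexp (by positivity)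
    nlinarith
  · filter_upwards with a x hx
    have h1 : HasDerivAt (fun x : ℝ => -β * V a + β * a * x) (β * a) x := by
      simpa using ((hasDerivAt_id x).const_mul (β * a)).const_add (-β * V a)
    have h2 := (h1.exp).const_mul (g a)
    have funeq : (fun x : ℝ => g a * Real.exp (-β * V a + β * a * x)) =
        fun x : ℝ => g a * Real.exp (-β * (V a - x * a)) := by
      funext y; congr 2; ring
    rw [funeq] at h2
    refine h2.congr_deriv ?_
    rw [show -β * (V a - x * a) = -β * V a + β * a * x from by ring]
    ring

/-- **The elastic modulus.**
The mean spacing `F ↦ m(T,F)` under an external force `F` is differentiable at `F = 0` with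
derivative `R = β·(⟨u²⟩ - ⟨u⟩²)`, the Gibbs variance of the spacing times `β`; moreover
`R > 0`. -/
theorem elastic_modulus
    (β : ℝ) (hβ : 0 < β)
    (V : ℝ → ℝ)
    (hcont : ContinuousOn V (Ioi 0))
    (hV0 : Tendsto V (𝓝[>] 0) atTop)
    (F₀ : ℝ) (hF₀ : 0 < F₀)
    (hint : ∀ F : ℝ, |F| < F₀ →
      IntegrableOn (fun u => Real.exp (-β * (V u - F * u))) (Ioi 0) ∧
      IntegrableOn (fun u => u * Real.exp (-β * (V u - F * u))) (Ioi 0) ∧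
      IntegrableOn (fun u => u ^ 2 * Real.exp (-β * (V u - F * u))) (Ioi 0)) :
    HasDerivAt
      (fun F : ℝ =>
        (∫ u in Ioi (0:ℝ), u * Real.exp (-β * (V u - F * u))) /
          (∫ u in Ioi (0:ℝ), Real.exp (-β * (V u - F * u))))
      (β * ((∫ u in Ioi (0:ℝ), u ^ 2 * Real.exp (-β * V u)) /
            (∫ u in Ioi (0:ℝ), Real.exp (-β * V u)) -
          ((∫ u in Ioi (0:ℝ), u * Real.exp (-β * V u)) /
              (∫ u in Ioi (0:ℝ), Real.exp (-β * V u))) ^ 2))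
      0 ∧
    0 < β * ((∫ u in Ioi (0:ℝ), u ^ 2 * Real.exp (-β * V u)) /
          (∫ u in Ioi (0:ℝ), Real.exp (-β * V u)) -
        ((∫ u in Ioi (0:ℝ), u * Real.exp (-β * V u)) /
            (∫ u in Ioi (0:ℝ), Real.exp (-β * V u))) ^ 2) := by
  have h0 : |(0:ℝ)| < F₀ := by simpa using hF₀
  set D₀ := ∫ u in Ioi (0:ℝ), Real.exp (-β * V u) with hD₀def
  set N₀ := ∫ u in Ioi (0:ℝ), u * Real.exp (-β * V u) with hN₀def
  set M₂ := ∫ u in Ioi (0:ℝ), u ^ 2 * Real.exp (-β * V u) with hM₂def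
  -- integrability at F = 0, in the `-β * V u` form
  have hi0 : IntegrableOn (fun u => Real.exp (-β * V u)) (Ioi 0) := by
    simpa using (hint 0 h0).1
  have hi1 : IntegrableOn (fun u => u * Real.exp (-β * V u)) (Ioi 0) := by
    simpa using (hint 0 h0).2.1
  have hi2 : IntegrableOn (fun u => u ^ 2 * Real.exp (-β * V u)) (Ioi 0) := by
    simpa using (hint 0 h0).2.2
  -- positivity of D₀
  have hD₀pos : 0 < D₀ := by
    rw [hD₀def, setIntegral_pos_iff_support_of_nonneg_ae
      (Eventually.of_forall fun u => (Real.exp_pos _).le) hi0]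
    have hsupp : Ioi (0:ℝ) ⊆ Function.support (fun u => Real.exp (-β * V u)) ∩ Ioi 0 :=
      fun u hu => ⟨(Real.exp_pos _).ne', hu⟩
    calc (0:ENNReal) < volume (Ioi (0:ℝ)) := by simp [Real.volume_Ioi]
      _ ≤ _ := measure_mono hsupp
  have hD₀ne : D₀ ≠ 0 := hD₀pos.ne'
  -- derivatives of numerator and denominator
  have hD : HasDerivAt (fun F : ℝ => ∫ u in Ioi (0:ℝ), Real.exp (-β * (V u - F * u)))
      (β * N₀) 0 := by
    have := aux_deriv β F₀ hβ hF₀ V (fun _ => 1) (fun u _ => zero_le_one)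
      (fun F hF => by simpa using (hint F hF).1)
      (fun F hF => by simpa using (hint F hF).2.1)
    simp only [one_mul, mul_one, zero_mul, sub_zero] at this
    rwa [integral_const_mul, ← hN₀def] at this
  have hN : HasDerivAt (fun F : ℝ => ∫ u in Ioi (0:ℝ), u * Real.exp (-β * (V u - F * u)))
      (β * M₂) 0 := by
    have := aux_deriv β F₀ hβ hF₀ V (fun u => u) (fun u hu => le_of_lt hu)
      (fun F hF => (hint F hF).2.1)
      (fun F hF => by
        have := (hint F hF).2.2
        simpa [pow_two, mul_assoc] using this)
    simp only [zero_mul, sub_zero] at this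
    rw [integral_const_mul] at this
    have hrw : (∫ a in Ioi (0:ℝ), a * a * Real.exp (-β * V a)) = M₂ := by
      rw [hM₂def]; congr 1; funext u; ring
    rwa [hrw] at this
  -- quotient rule
  have hq := hN.div hD (by simp only [zero_mul, sub_zero]; exact hD₀ne)
  constructor
  · refine hq.congr_deriv ?_
    have e1 : (∫ u in Ioi (0:ℝ), u * Real.exp (-β * (V u - 0 * u))) = N₀ := by
      simp [hN₀def]
    have e2 : (∫ u in Ioi (0:ℝ), Real.exp (-β * (V u - 0 * u))) = D₀ := by
      simp [hD₀def]
    rw [e1, e2]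
    field_simp
  · -- positivity of the variance
    set m := N₀ / D₀ with hmdef
    have hIint : IntegrableOn (fun u => (u - m) ^ 2 * Real.exp (-β * V u)) (Ioi 0) := by
      have : (fun u : ℝ => (u - m) ^ 2 * Real.exp (-β * V u)) = fun u =>
          u ^ 2 * Real.exp (-β * V u) - (2 * m) * (u * Real.exp (-β * V u)) +
            m ^ 2 * Real.exp (-β * V u) := by
        funext u; ring
      rw [this]
      exact (hi2.sub (hi1.const_mul (2 * m))).add (hi0.const_mul (m ^ 2))
    have hIpos : 0 < ∫ u in Ioi (0:ℝ), (u - m) ^ 2 * Real.exp (-β * V u) := by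
      rw [setIntegral_pos_iff_support_of_nonneg_ae
        (Eventually.of_forall fun u => by positivity) hIint]
      have hsupp : Ioi (0:ℝ) \ {m} ⊆
          Function.support (fun u => (u - m) ^ 2 * Real.exp (-β * V u)) ∩ Ioi 0 := by
        rintro u ⟨hu, hne⟩
        refine ⟨?_, hu⟩
        have h1 : u - m ≠ 0 := sub_ne_zero.2 (by simpa using hne)
        exact mul_ne_zero (pow_ne_zero 2 h1) (Real.exp_ne_zero _)
      calc (0:ENNReal) < volume (Ioi (0:ℝ) \ {m}) := by
            rw [measure_diff_null (measure_singleton m)]; simp [Real.volume_Ioi]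
        _ ≤ _ := measure_mono hsupp
    have hIval : (∫ u in Ioi (0:ℝ), (u - m) ^ 2 * Real.exp (-β * V u)) =
        M₂ - 2 * m * N₀ + m ^ 2 * D₀ := by
      have e : (fun u : ℝ => (u - m) ^ 2 * Real.exp (-β * V u)) = fun u =>
          u ^ 2 * Real.exp (-β * V u) - (2 * m) * (u * Real.exp (-β * V u)) +
            m ^ 2 * Real.exp (-β * V u) := by
        funext u; ring
      have hsub : IntegrableOn (fun u : ℝ => u ^ 2 * Real.exp (-β * V u) -
          2 * m * (u * Real.exp (-β * V u))) (Ioi 0) := hi2.sub (hi1.const_mul (2 * m))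
      rw [e, integral_add hsub (hi0.const_mul (m ^ 2)),
        integral_sub hi2 (hi1.const_mul (2 * m)), integral_const_mul, integral_const_mul]
    have hvar : M₂ / D₀ - (N₀ / D₀) ^ 2 =
        (∫ u in Ioi (0:ℝ), (u - m) ^ 2 * Real.exp (-β * V u)) / D₀ := by
      rw [hIval, hmdef]
      field_simp
      ring
    rw [hvar]
    positivity
end

section
/- Fix β > 0 and let V : (0,∞) → ℝ be continuous with V(u) → ∞ as u → 0⁺, such that there exists F₀ > 0 so that for all F with |F| < F₀ the functions u ↦ exp(-β(V(u) - Fu)), u ↦ u·exp(-β(V(u) - Fu)), and u ↦ u²·exp(-β(V(u) - Fu)) are integrable on (0,∞). Then the elastic expansion satisfies Hooke's law: m(T,F) - m(T,0) = R·F + o(F) as F → 0, where R = β·(⟨u²⟩ - ⟨u⟩²) > 0 is the variance of the spacing under the Gibbs measure at F = 0 multiplied by β. -/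
open MeasureTheory Set Filter Topology Asymptotics

private lemma hasDerivAt_param_integral
    (β F₀ : ℝ) (hβ : 0 < β) (hF₀ : 0 < F₀) (V g : ℝ → ℝ)
    (hg : ∀ u ∈ Ioi (0:ℝ), 0 ≤ g u)
    (h1 : ∀ F : ℝ, |F| < F₀ →
      IntegrableOn (fun u => g u * Real.exp (-β * (V u - F * u))) (Ioi 0))
    (h2 : ∀ F : ℝ, |F| < F₀ →
      IntegrableOn (fun u => u * g u * Real.exp (-β * (V u - F * u))) (Ioi 0)) :
    HasDerivAt (fun F => ∫ u in Ioi (0:ℝ), g u * Real.exp (-β * (V u - F * u)))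
      (β * ∫ u in Ioi (0:ℝ), u * g u * Real.exp (-β * V u)) 0 := by
  have hhalf : |F₀ / 2| < F₀ := by rw [abs_of_pos (by linarith)]; linarith
  have h0 : |(0:ℝ)| < F₀ := by simpa using hF₀
  set μ := volume.restrict (Ioi (0:ℝ))
  have key := hasDerivAt_integral_of_dominated_loc_of_deriv_le (μ := μ)
    (F := fun F u => g u * Real.exp (-β * (V u - F * u)))
    (F' := fun F u => g u * Real.exp (-β * (V u - F * u)) * (β * u))
    (x₀ := 0)
    (bound := fun u => β * (u * g u * Real.exp (-β * (V u - F₀ / 2 * u))))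
    (Metric.ball_mem_nhds 0 (half_pos hF₀))
    (eventually_of_mem (Metric.ball_mem_nhds 0 hF₀)
      (fun F hF => (h1 F (by simpa [Real.dist_eq] using hF)).aestronglyMeasurable))
    (h1 0 h0)
    ((h1 0 h0).aestronglyMeasurable.mul
      ((continuous_const.mul continuous_id).aestronglyMeasurable))
    ?_ ((h2 (F₀/2) hhalf).const_mul β) ?_
  · have heq : (∫ u in Ioi (0:ℝ), g u * Real.exp (-β * (V u - 0 * u)) * (β * u))
        = β * ∫ u in Ioi (0:ℝ), u * g u * Real.exp (-β * V u) := by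
      rw [← integral_const_mul]
      refine setIntegral_congr_fun measurableSet_Ioi fun u hu => ?_
      simp only [zero_mul, sub_zero]; ring
    have := key.2
    rwa [heq] at this
  · -- bound
    rw [ae_restrict_iff' measurableSet_Ioi]
    refine ae_of_all _ fun u hu F hF => ?_
    have hu0 : (0:ℝ) < u := hu
    have hF' : F < F₀ / 2 := by
      have := abs_lt.1 (by simpa [Real.dist_eq] using hF)
      linarith [this.2]
    have hexp : Real.exp (-β * (V u - F * u)) ≤ Real.exp (-β * (V u - F₀ / 2 * u)) := by
      apply Real.exp_le_exp.2
      nlinarith [mul_le_mul_of_nonneg_left (mul_le_mul_of_nonneg_right hF'.le hu0.le) hβ.le]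
    rw [Real.norm_eq_abs, abs_of_nonneg (mul_nonneg
      (mul_nonneg (hg u hu) (Real.exp_pos _).le) (by positivity))]
    calc g u * Real.exp (-β * (V u - F * u)) * (β * u)
        ≤ g u * Real.exp (-β * (V u - F₀ / 2 * u)) * (β * u) := by
          have := mul_le_mul_of_nonneg_left hexp (hg u hu)
          have := mul_le_mul_of_nonneg_right this (by positivity : (0:ℝ) ≤ β * u)
          linarith
      _ = β * (u * g u * Real.exp (-β * (V u - F₀ / 2 * u))) := by ring
  · -- diff
    refine ae_of_all _ fun u F _ => ?_
    have hin : HasDerivAt (fun F : ℝ => -β * (V u - F * u)) (β * u) F := by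
      have h := (((hasDerivAt_id F).mul_const u).const_sub (V u)).const_mul (-β)
      exact h.congr_deriv (by ring)
    have := hin.exp.const_mul (g u)
    exact this.congr_deriv (by ring)

/-- **Hooke's law for the one-dimensional chain.**
The elastic expansion satisfies `m(T,F) - m(T,0) = R·F + o(F)` as `F → 0`, where
`R = β·(⟨u²⟩ - ⟨u⟩²) > 0` is `β` times the Gibbs variance of the spacing at `F = 0`. -/
theorem hookes_law
    (β : ℝ) (hβ : 0 < β)
    (V : ℝ → ℝ)
    (hcont : ContinuousOn V (Ioi 0))
    (hV0 : Tendsto V (𝓝[>] 0) atTop)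
    (F₀ : ℝ) (hF₀ : 0 < F₀)
    (hint : ∀ F : ℝ, |F| < F₀ →
      IntegrableOn (fun u => Real.exp (-β * (V u - F * u))) (Ioi 0) ∧
      IntegrableOn (fun u => u * Real.exp (-β * (V u - F * u))) (Ioi 0) ∧
      IntegrableOn (fun u => u ^ 2 * Real.exp (-β * (V u - F * u))) (Ioi 0)) :
    (fun F : ℝ =>
        (∫ u in Ioi (0:ℝ), u * Real.exp (-β * (V u - F * u))) /
            (∫ u in Ioi (0:ℝ), Real.exp (-β * (V u - F * u))) -
          (∫ u in Ioi (0:ℝ), u * Real.exp (-β * (V u - 0 * u))) /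
            (∫ u in Ioi (0:ℝ), Real.exp (-β * (V u - 0 * u))) -
          (β * ((∫ u in Ioi (0:ℝ), u ^ 2 * Real.exp (-β * V u)) /
                (∫ u in Ioi (0:ℝ), Real.exp (-β * V u)) -
              ((∫ u in Ioi (0:ℝ), u * Real.exp (-β * V u)) /
                  (∫ u in Ioi (0:ℝ), Real.exp (-β * V u))) ^ 2)) * F)
      =o[𝓝 0] (fun F : ℝ => F) ∧
    0 < β * ((∫ u in Ioi (0:ℝ), u ^ 2 * Real.exp (-β * V u)) /
          (∫ u in Ioi (0:ℝ), Real.exp (-β * V u)) -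
        ((∫ u in Ioi (0:ℝ), u * Real.exp (-β * V u)) /
            (∫ u in Ioi (0:ℝ), Real.exp (-β * V u))) ^ 2) := by
  have h0 : |(0:ℝ)| < F₀ := by simpa using hF₀
  set I0 : ℝ := ∫ u in Ioi (0:ℝ), Real.exp (-β * V u) with hI0
  set I1 : ℝ := ∫ u in Ioi (0:ℝ), u * Real.exp (-β * V u) with hI1
  set I2 : ℝ := ∫ u in Ioi (0:ℝ), u ^ 2 * Real.exp (-β * V u) with hI2
  -- integrability at F = 0, in the -β * V u form
  have e0 : IntegrableOn (fun u => Real.exp (-β * V u)) (Ioi (0:ℝ)) := by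
    have := (hint 0 h0).1; simpa using this
  have e1 : IntegrableOn (fun u => u * Real.exp (-β * V u)) (Ioi (0:ℝ)) := by
    have := (hint 0 h0).2.1; simpa using this
  have e2 : IntegrableOn (fun u => u ^ 2 * Real.exp (-β * V u)) (Ioi (0:ℝ)) := by
    have := (hint 0 h0).2.2; simpa using this
  -- positivity of the partition function
  have hI0pos : 0 < I0 := by
    rw [hI0, setIntegral_pos_iff_support_of_nonneg_ae
      (ae_of_all _ fun u => (Real.exp_pos _).le) e0]
    have hsupp : Function.support (fun u : ℝ => Real.exp (-β * V u)) = univ := by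
      ext u; simp [Real.exp_ne_zero]
    rw [hsupp, univ_inter]
    simp
  -- derivative of the partition function
  have hZ : HasDerivAt (fun F => ∫ u in Ioi (0:ℝ), Real.exp (-β * (V u - F * u)))
      (β * I1) 0 := by
    have := hasDerivAt_param_integral β F₀ hβ hF₀ V (fun _ => 1)
      (fun _ _ => zero_le_one)
      (fun F hF => by simpa using (hint F hF).1)
      (fun F hF => by simpa [mul_one] using (hint F hF).2.1)
    simpa [mul_one, hI1] using this
  -- derivative of the numerator
  have hN : HasDerivAt (fun F => ∫ u in Ioi (0:ℝ), u * Real.exp (-β * (V u - F * u)))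
      (β * I2) 0 := by
    have := hasDerivAt_param_integral β F₀ hβ hF₀ V (fun u => u)
      (fun u hu => le_of_lt hu)
      (fun F hF => (hint F hF).2.1)
      (fun F hF => by
        have := (hint F hF).2.2
        exact this.congr_fun (fun u _ => by ring) measurableSet_Ioi)
    have heq : (∫ u in Ioi (0:ℝ), u * u * Real.exp (-β * V u)) = I2 := by
      rw [hI2]
      exact setIntegral_congr_fun measurableSet_Ioi fun u _ => by ring
    rwa [heq] at this
  -- the value at F = 0
  have hZ0 : (∫ u in Ioi (0:ℝ), Real.exp (-β * (V u - 0 * u))) = I0 := by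
    rw [hI0]; refine setIntegral_congr_fun measurableSet_Ioi fun u _ => by norm_num
  have hN0 : (∫ u in Ioi (0:ℝ), u * Real.exp (-β * (V u - 0 * u))) = I1 := by
    rw [hI1]; refine setIntegral_congr_fun measurableSet_Ioi fun u _ => by norm_num
  -- variance positivity
  have hvarpos : 0 < I2 / I0 - (I1 / I0) ^ 2 := by
    set m : ℝ := I1 / I0 with hm
    have hfi : IntegrableOn (fun u => (u - m) ^ 2 * Real.exp (-β * V u)) (Ioi (0:ℝ)) := by
      have hrw : (fun u : ℝ => (u - m) ^ 2 * Real.exp (-β * V u))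
          = fun u => u ^ 2 * Real.exp (-β * V u)
            - (2 * m) * (u * Real.exp (-β * V u)) + m ^ 2 * Real.exp (-β * V u) :=
        funext fun u => by ring
      rw [hrw]
      exact (e2.sub (e1.const_mul (2 * m))).add (e0.const_mul (m ^ 2))
    have hkey : 0 < ∫ u in Ioi (0:ℝ), (u - m) ^ 2 * Real.exp (-β * V u) := by
      rw [setIntegral_pos_iff_support_of_nonneg_ae
        (ae_of_all _ fun u => by positivity) hfi]
      refine lt_of_lt_of_le ?_ (measure_mono (s := Ioi (|m| + 1)) fun u hu => ?_)
      · simp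
      · have hu' : |m| + 1 < u := hu
        have hum : u ≠ m := by
          have : m ≤ |m| := le_abs_self m
          intro h; rw [h] at hu'; linarith
        refine ⟨?_, ?_⟩
        · simp only [Function.mem_support]
          have : (u - m) ^ 2 ≠ 0 := pow_ne_zero _ (sub_ne_zero.2 hum)
          positivity
        · have : (0:ℝ) ≤ |m| := abs_nonneg m
          exact mem_Ioi.2 (by linarith)
    have hsplit : (∫ u in Ioi (0:ℝ), (u - m) ^ 2 * Real.exp (-β * V u))
        = I2 - (2 * m) * I1 + m ^ 2 * I0 := by
      have hrw : (fun u : ℝ => (u - m) ^ 2 * Real.exp (-β * V u))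
          = fun u => u ^ 2 * Real.exp (-β * V u)
            - (2 * m) * (u * Real.exp (-β * V u)) + m ^ 2 * Real.exp (-β * V u) :=
        funext fun u => by ring
      have hA : Integrable (fun u : ℝ => u ^ 2 * Real.exp (-β * V u)
          - 2 * m * (u * Real.exp (-β * V u))) (volume.restrict (Ioi 0)) :=
        e2.sub (e1.const_mul (2 * m))
      have hB : Integrable (fun u : ℝ => m ^ 2 * Real.exp (-β * V u))
          (volume.restrict (Ioi 0)) := e0.const_mul _
      rw [hrw, integral_add hA hB, integral_sub e2 (e1.const_mul (2 * m)),
        integral_const_mul, integral_const_mul, hI0, hI1, hI2]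
    rw [hsplit] at hkey
    have : I2 / I0 - (I1 / I0) ^ 2 = (I2 - 2 * m * I1 + m ^ 2 * I0) / I0 := by
      rw [hm]; field_simp; ring
    rw [this]
    exact div_pos hkey hI0pos
  refine ⟨?_, mul_pos hβ hvarpos⟩
  -- the quotient has derivative R at 0
  have hq : HasDerivAt
      (fun F => (∫ u in Ioi (0:ℝ), u * Real.exp (-β * (V u - F * u))) /
        (∫ u in Ioi (0:ℝ), Real.exp (-β * (V u - F * u))))
      (β * (I2 / I0 - (I1 / I0) ^ 2)) 0 := by
    have hne : (∫ u in Ioi (0:ℝ), Real.exp (-β * (V u - 0 * u))) ≠ 0 := by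
      rw [hZ0]; exact hI0pos.ne'
    have := hN.fun_div hZ hne
    refine this.congr_deriv ?_
    rw [hZ0, hN0]
    field_simp
  rw [hasDerivAt_iff_isLittleO] at hq
  simp only [sub_zero, smul_eq_mul] at hq
  refine hq.congr' (Filter.Eventually.of_forall fun F => ?_) EventuallyEq.rfl
  dsimp only
  ring
end
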